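/- For integers n ≥ 1 and 0 ≤ k ≤ n−1, the number op_{n,≥k} of ordered preference sets of length n with at least k flaws equals the binomial coefficient C(2n−1, n−1−k). -/

import Mathlib

/-- The first unoccupied parking space `j` with `p ≤ j ≤ n`, if any. -/
def firstFree (n : ℕ) (occ : Finset ℕ) (p : ℕ) : Option ℕ :=
  (List.range' p (n + 1 - p)).find? (fun j => decide (j ∉ occ))

/-- Number of cars that fail to park, processing the preference list in order,
given the set of already occupied spaces. -/
def flawsFrom (n : ℕ) : List ℕ → Finset ℕ → ℕ
  | [], _ => 0
  | p :: rest, occ =>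
    match firstFree n occ p with
    | none => flawsFrom n rest occ + 1
    | some j => flawsFrom n rest (insert j occ)

/-- The number of flaws (unparked cars) of a preference list of length `n`. -/
def flaws (n : ℕ) (a : List ℕ) : ℕ := flawsFrom n a ∅

/-- A preference set of length `n`: a list of length `n` with entries in `{1, …, n}`. -/
def IsPrefSet (n : ℕ) (a : List ℕ) : Prop :=
  a.length = n ∧ ∀ x ∈ a, 1 ≤ x ∧ x ≤ n

/-- An ordered preference set of length `n`: a nondecreasing preference set. -/
def IsOrderedPrefSet (n : ℕ) (a : List ℕ) : Prop :=
  IsPrefSet n a ∧ a.Pairwise (· ≤ ·)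

/-- `op_{n,≥k}`: number of ordered preference sets of length `n` with at least `k` flaws. -/
noncomputable def opGe (n k : ℕ) : ℕ :=
  {a : List ℕ | IsOrderedPrefSet n a ∧ k ≤ flaws n a}.ncard

/-- `op_{n,≤k}`: number of ordered preference sets of length `n` with at most `k` flaws. -/
noncomputable def opLe (n k : ℕ) : ℕ :=
  {a : List ℕ | IsOrderedPrefSet n a ∧ flaws n a ≤ k}.ncard

/-- `op_{n,k}`: number of ordered preference sets of length `n` with exactly `k` flaws. -/
noncomputable def opEq (n k : ℕ) : ℕ :=
  {a : List ℕ | IsOrderedPrefSet n a ∧ flaws n a = k}.ncard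

/-- `op_{n,≥k,≤l}`: at least `k` flaws, every entry at most `l`. -/
noncomputable def opGeLe (n k l : ℕ) : ℕ :=
  {a : List ℕ | IsOrderedPrefSet n a ∧ k ≤ flaws n a ∧ ∀ x ∈ a, x ≤ l}.ncard

/-- `op_{n,≥k,≤l}^m`: at least `k` flaws, every entry at most `l`, leading term `m`. -/
noncomputable def opGeLeLead (n k l m : ℕ) : ℕ :=
  {a : List ℕ | IsOrderedPrefSet n a ∧ k ≤ flaws n a ∧ (∀ x ∈ a, x ≤ l) ∧
    a.head? = some m}.ncard

/-- `op_{n,k,≤l}^m`: exactly `k` flaws, every entry at most `l`, leading term `m`. -/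
noncomputable def opEqLeLead (n k l m : ℕ) : ℕ :=
  {a : List ℕ | IsOrderedPrefSet n a ∧ flaws n a = k ∧ (∀ x ∈ a, x ≤ l) ∧
    a.head? = some m}.ncard

/-- `op_{n,k}^m`: exactly `k` flaws, leading term `m`. -/
noncomputable def opLead (n k m : ℕ) : ℕ :=
  {a : List ℕ | IsOrderedPrefSet n a ∧ flaws n a = k ∧ a.head? = some m}.ncard

/-- `op_{n,k,=l}^m`: exactly `k` flaws, maximal entry exactly `l`, leading term `m`. -/
noncomputable def opMaxLead (n k l m : ℕ) : ℕ :=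
  {a : List ℕ | IsOrderedPrefSet n a ∧ flaws n a = k ∧ (∀ x ∈ a, x ≤ l) ∧ l ∈ a ∧
    a.head? = some m}.ncard

/-- Binomial coefficient `C(a, b)` with an integer lower index, which is `0`
when `b < 0` (the standard convention). -/
def chooseInt (a : ℕ) (b : ℤ) : ℕ := if 0 ≤ b then a.choose b.toNat else 0


def model (n : ℕ) : List ℕ → ℕ → ℕ
  | [], _ => 0
  | p :: rest, t => if t < n then model n rest (max p (t+1)) else model n rest t + 1

lemma find?_range'_spec (occ : Finset ℕ) (t : ℕ) :
    ∀ (len p : ℕ), (∀ j, p ≤ j → j < p + len → (j ∈ occ ↔ j ≤ t)) →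
    (List.range' p len).find? (fun j => decide (j ∉ occ)) =
      if max p (t+1) < p + len then some (max p (t+1)) else none := by
  intro len
  induction len with
  | zero =>
    intro p h
    have : ¬ (max p (t+1) < p + 0) := by
      have : p ≤ max p (t+1) := le_max_left _ _
      omega
    simp [List.range', this]
  | succ l ih =>
    intro p h
    rw [List.range'_succ, List.find?_cons]
    by_cases hp : p ∈ occ
    · have hpt : p ≤ t := (h p le_rfl (by omega)).mp hp
      have hd : decide (p ∉ occ) = false := by simp [hp]
      rw [hd]
      have hrec := ih (p+1) (fun j hj1 hj2 => h j (by omega) (by omega))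
      rw [hrec]
      have hmax : max (p+1) (t+1) = max p (t+1) := by
        have := le_max_right p (t+1)
        have := le_max_left p (t+1)
        have h1 : max (p+1) (t+1) = t+1 := max_eq_right (by omega)
        have h2 : max p (t+1) = t+1 := max_eq_right (by omega)
        omega
      rw [hmax, show p + 1 + l = p + (l + 1) from by omega]
    · have hpt : ¬ (p ≤ t) := fun hle => hp ((h p le_rfl (by omega)).mpr hle)
      have hd : decide (p ∉ occ) = true := by simp [hp]
      rw [hd]
      have hmax : max p (t+1) = p := max_eq_left (by omega)
      rw [hmax, if_pos (by omega)]

lemma flawsFrom_eq_model (n : ℕ) :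
    ∀ (a : List ℕ) (occ : Finset ℕ) (t c : ℕ), a.Pairwise (· ≤ ·) →
    (∀ x ∈ a, c ≤ x ∧ 1 ≤ x ∧ x ≤ n) →
    (∀ j, c ≤ j → j ≤ n → (j ∈ occ ↔ j ≤ t)) → t ≤ n →
    flawsFrom n a occ = model n a t := by
  intro a
  induction a with
  | nil => intro occ t c _ _ _ _; rfl
  | cons p rest ih =>
    intro occ t c hsort hbd hinv ht
    have hp := hbd p List.mem_cons_self
    have hff : firstFree n occ p =
        if max p (t+1) < p + (n + 1 - p) then some (max p (t+1)) else none := by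
      unfold firstFree
      exact find?_range'_spec occ t (n+1-p) p
        (fun j hj1 hj2 => hinv j (le_trans hp.1 hj1) (by omega))
    have hlen : p + (n + 1 - p) = n + 1 := by omega
    rw [hlen] at hff
    have hsort' : rest.Pairwise (· ≤ ·) := hsort.of_cons
    have hrest : ∀ x ∈ rest, p ≤ x := fun x hx => (List.pairwise_cons.mp hsort).1 x hx
    have hmaxlb1 : p ≤ max p (t+1) := le_max_left _ _
    have hmaxlb2 : t + 1 ≤ max p (t+1) := le_max_right _ _
    have hmaxcases : max p (t+1) = p ∨ max p (t+1) = t+1 := max_choice _ _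
    by_cases htn : t < n
    · have hc : max p (t+1) < n + 1 := by omega
      simp only [flawsFrom]
      rw [hff, if_pos hc]
      show flawsFrom n rest (insert (max p (t+1)) occ) = model n (p :: rest) t
      rw [model, if_pos htn]
      apply ih _ _ p hsort'
        (fun x hx => ⟨hrest x hx, (hbd x (List.mem_cons_of_mem _ hx)).2⟩)
      · intro j hj1 hj2
        simp only [Finset.mem_insert]
        constructor
        · rintro (rfl | hj)
          · exact le_rfl
          · have := (hinv j (le_trans hp.1 hj1) hj2).mp hj
            omega
        · intro hjle
          rcases Nat.lt_or_ge j (max p (t+1)) with hlt | hge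
          · right
            apply (hinv j (le_trans hp.1 hj1) hj2).mpr
            omega
          · left; omega
      · omega
    · have hc : ¬ (max p (t+1) < n + 1) := by omega
      simp only [flawsFrom]
      rw [hff, if_neg hc]
      show flawsFrom n rest occ + 1 = model n (p :: rest) t
      rw [model, if_neg htn]
      congr 1
      exact ih _ _ p hsort'
        (fun x hx => ⟨hrest x hx, (hbd x (List.mem_cons_of_mem _ hx)).2⟩)
        (fun j hj1 hj2 => hinv j (le_trans hp.1 hj1) hj2) ht

lemma model_ge_iff (n : ℕ) :
    ∀ (a : List ℕ) (t k : ℕ), (∀ x ∈ a, x ≤ n) → t ≤ n →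
    (k + 1 ≤ model n a t ↔
      (∃ i, ∃ _ : i < a.length, n + k + 1 ≤ a[i] + (a.length - 1 - i)) ∨
        n + k + 1 ≤ t + a.length) := by
  intro a
  induction a with
  | nil =>
    intro t k _ ht
    simp only [model, List.length_nil]
    constructor
    · omega
    · rintro (⟨i, hi, _⟩ | h) <;> omega
  | cons p rest ih =>
    intro t k hbd ht
    have hp : p ≤ n := hbd p List.mem_cons_self
    have hbd' : ∀ x ∈ rest, x ≤ n := fun x hx => hbd x (List.mem_cons_of_mem _ hx)
    rw [model]
    have e0 : (p :: rest)[0] = p := rfl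
    by_cases htn : t < n
    · rw [if_pos htn]
      have hmaxlb1 : p ≤ max p (t+1) := le_max_left _ _
      have hmaxlb2 : t + 1 ≤ max p (t+1) := le_max_right _ _
      have hmaxcases : max p (t+1) = p ∨ max p (t+1) = t+1 := max_choice _ _
      have ht' : max p (t+1) ≤ n := by omega
      rw [ih (max p (t+1)) k hbd' ht']
      simp only [List.length_cons]
      constructor
      · rintro (⟨i, hi, hgi⟩ | h)
        · left
          refine ⟨i + 1, by omega, ?_⟩
          simp only [List.getElem_cons_succ]
          omega
        · rcases Nat.lt_or_ge p (t+1) with hlt | hge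
          · right; omega
          · left
            refine ⟨0, by omega, ?_⟩
            rw [e0]
            omega
      · rintro (⟨i, hi, hgi⟩ | h)
        · rcases i with _ | i
          · rw [e0] at hgi
            right
            omega
          · left
            refine ⟨i, by omega, ?_⟩
            simp only [List.getElem_cons_succ] at hgi
            omega
        · right; omega
    · rw [if_neg htn]
      have htn' : t = n := by omega
      rcases k with _ | k
      · simp only [List.length_cons]
        constructor
        · intro _; right; omega
        · intro _; omega
      · constructor
        · intro hh
          have : k + 1 ≤ model n rest t := by omega
          rcases (ih t k hbd' ht).mp this with ⟨i, hi, hgi⟩ | h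
          · right
            have hrb : rest[i] ≤ n := hbd' _ (List.getElem_mem _)
            simp only [List.length_cons]
            omega
          · right
            simp only [List.length_cons]
            omega
        · intro hh
          have : k + 1 ≤ model n rest t := by
            apply (ih t k hbd' ht).mpr
            rcases hh with ⟨i, hi, hgi⟩ | h
            · simp only [List.length_cons] at hi
              rcases i with _ | i
              · rw [e0] at hgi
                right
                simp only [List.length_cons] at hgi
                omega
              · left
                refine ⟨i, by omega, ?_⟩
                simp only [List.getElem_cons_succ, List.length_cons] at hgi
                omega
            · right
              simp only [List.length_cons] at h
              omega
          omega

lemma flaws_ge_iff (n k : ℕ) (a : List ℕ) (hn : 1 ≤ n)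
    (hlen : a.length = n) (hbd : ∀ x ∈ a, 1 ≤ x ∧ x ≤ n) (hs : a.Pairwise (· ≤ ·)) :
    k ≤ flaws n a ↔ ∃ i, ∃ _ : i < a.length, k + i + 1 ≤ a[i] := by
  have hm : flaws n a = model n a 0 :=
    flawsFrom_eq_model n a ∅ 0 1 hs (fun x hx => ⟨(hbd x hx).1, hbd x hx⟩)
      (by intro j h1 h2; simp; omega) (by omega)
  rcases k with _ | k
  · simp only [Nat.zero_le, true_iff]
    refine ⟨0, by omega, ?_⟩
    have := hbd (a[0]'(by omega)) (List.getElem_mem _)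
    omega
  · rw [hm, Nat.succ_le_iff, show (k:ℕ) < model n a 0 ↔ k + 1 ≤ model n a 0 from Iff.rfl,
      model_ge_iff n a 0 k (fun x hx => (hbd x hx).2) (by omega)]
    constructor
    · rintro (⟨i, hi, hgi⟩ | h)
      · refine ⟨i, hi, ?_⟩
        have hab : a[i] ≤ n := (hbd _ (List.getElem_mem _)).2
        omega
      · omega
    · rintro ⟨i, hi, hgi⟩
      left
      refine ⟨i, hi, ?_⟩
      omega


/-- height of the lattice walk of `S` after `p` steps. -/
def hgt (S : Finset ℕ) (p : ℕ) : ℤ := (p : ℤ) - 2 * (S ∩ Finset.range p).card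

lemma hgt_zero (S : Finset ℕ) : hgt S 0 = 0 := by simp [hgt]

lemma hgt_succ (S : Finset ℕ) (p : ℕ) :
    hgt S (p+1) = hgt S p + (if p ∈ S then -1 else 1) := by
  have : S ∩ Finset.range (p+1) =
      if p ∈ S then insert p (S ∩ Finset.range p) else S ∩ Finset.range p := by
    split_ifs with hp
    · ext x
      simp only [Finset.mem_inter, Finset.mem_range, Finset.mem_insert]
      constructor
      · rintro ⟨hx, hlt⟩
        rcases Nat.lt_or_ge x p with h | h
        · right; exact ⟨hx, h⟩
        · left; omega
      · rintro (rfl | ⟨hx, hlt⟩)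
        · exact ⟨hp, by omega⟩
        · exact ⟨hx, by omega⟩
    · ext x
      simp only [Finset.mem_inter, Finset.mem_range]
      constructor
      · rintro ⟨hx, hlt⟩
        refine ⟨hx, ?_⟩
        rcases Nat.lt_or_ge x p with h | h
        · exact h
        · exfalso; have : x = p := by omega
          subst this; exact hp hx
      · rintro ⟨hx, hlt⟩; exact ⟨hx, by omega⟩
  rw [hgt, hgt, this]
  split_ifs with hp
  · rw [Finset.card_insert_of_notMem (by simp)]
    push_cast
    ring
  · push_cast
    ring

lemma hgt_exists (k : ℕ) (S : Finset ℕ) : ∃ p, (k : ℤ) ≤ hgt S p := by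
  refine ⟨2 * S.card + k, ?_⟩
  have h1 : (S ∩ Finset.range (2 * S.card + k)).card ≤ S.card :=
    Finset.card_le_card (Finset.inter_subset_left)
  rw [hgt]
  push_cast
  omega

/-- First time the walk of `S` reaches height `k`. -/
def hitP (k : ℕ) (S : Finset ℕ) : ℕ := Nat.find (hgt_exists k S)

lemma hitP_spec (k : ℕ) (S : Finset ℕ) : (k : ℤ) ≤ hgt S (hitP k S) :=
  Nat.find_spec (hgt_exists k S)

lemma hitP_min (k : ℕ) (S : Finset ℕ) {q : ℕ} (hq : q < hitP k S) :
    ¬ (k : ℤ) ≤ hgt S q := Nat.find_min (hgt_exists k S) hq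

lemma hgt_hitP (k : ℕ) (S : Finset ℕ) : hgt S (hitP k S) = k := by
  rcases h : hitP k S with _ | q
  · have := hitP_spec k S
    rw [h] at this
    rw [hgt_zero] at this ⊢
    omega
  · have hs := hitP_spec k S
    rw [h] at hs
    have hm := hitP_min k S (q := q) (by omega)
    rw [hgt_succ] at hs ⊢
    split_ifs at hs ⊢ with hp <;> omega

lemma hitP_le_of_exists (k : ℕ) (S : Finset ℕ) {p : ℕ} (hp : (k:ℤ) ≤ hgt S p) :
    hitP k S ≤ p := Nat.find_min' (hgt_exists k S) hp

lemma hgt_congr {S T : Finset ℕ} (q : ℕ) (h : S ∩ Finset.range q = T ∩ Finset.range q) :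
    hgt S q = hgt T q := by rw [hgt, hgt, h]

/-- the reflection map -/
def reflMap (k m : ℕ) (S : Finset ℕ) : Finset ℕ :=
  symmDiff S (Finset.Ico (hitP k S) m)

lemma reflMap_inter_range (k m : ℕ) (S : Finset ℕ) (q : ℕ) (hq : q ≤ hitP k S) :
    reflMap k m S ∩ Finset.range q = S ∩ Finset.range q := by
  ext x
  simp only [reflMap, Finset.mem_inter, Finset.mem_range, Finset.mem_symmDiff,
    Finset.mem_Ico]
  constructor
  · rintro ⟨h1 | h1, h2⟩
    · exact ⟨h1.1, h2⟩
    · omega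
  · rintro ⟨h1, h2⟩
    exact ⟨Or.inl ⟨h1, by omega⟩, h2⟩

lemma hitP_reflMap (k m : ℕ) (S : Finset ℕ) (hm : hitP k S ≤ m) :
    hitP k (reflMap k m S) = hitP k S := by
  have hq : ∀ q, q ≤ hitP k S → hgt (reflMap k m S) q = hgt S q := fun q hq =>
    hgt_congr q (reflMap_inter_range k m S q hq)
  apply le_antisymm
  · apply hitP_le_of_exists
    rw [hq _ le_rfl, hgt_hitP]
  · by_contra hcon
    push_neg at hcon
    have h1 := hitP_spec k (reflMap k m S)
    rw [hq _ (by omega)] at h1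
    exact hitP_min k S hcon h1

lemma reflMap_involutive (k m : ℕ) (S : Finset ℕ) (hm : hitP k S ≤ m) :
    reflMap k m (reflMap k m S) = S := by
  rw [reflMap, hitP_reflMap k m S hm, reflMap, symmDiff_symmDiff_cancel_right]

lemma reflMap_subset (k m : ℕ) (S : Finset ℕ) (hS : S ⊆ Finset.range m) :
    reflMap k m S ⊆ Finset.range m := by
  intro x hx
  rw [reflMap, Finset.mem_symmDiff] at hx
  rcases hx with ⟨h1, _⟩ | ⟨h1, _⟩
  · exact hS h1
  · rw [Finset.mem_Ico] at h1
    simp only [Finset.mem_range]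
    omega

lemma reflMap_card (k m : ℕ) (S : Finset ℕ) (hS : S ⊆ Finset.range m)
    (hm : hitP k S ≤ m) : (reflMap k m S).card + S.card + k = m := by
  set p₀ := hitP k S with hp₀
  set I := Finset.Ico p₀ m with hI
  have hsd : reflMap k m S = (S \ I) ∪ (I \ S) := by
    rw [reflMap, symmDiff_def]
    rfl
  have hdisj : Disjoint (S \ I) (I \ S) := by
    apply Finset.disjoint_left.mpr
    intro x hx hx'
    rw [Finset.mem_sdiff] at hx hx'
    exact hx'.2 hx.1
  have hcard : (reflMap k m S).card = (S \ I).card + (I \ S).card := by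
    rw [hsd, Finset.card_union_of_disjoint hdisj]
  have e1 : (S \ I).card + (S ∩ I).card = S.card := Finset.card_sdiff_add_card_inter S I
  have e2 : (I \ S).card + (I ∩ S).card = I.card := Finset.card_sdiff_add_card_inter I S
  have e3 : (I ∩ S).card = (S ∩ I).card := by rw [Finset.inter_comm]
  have e4 : I.card = m - p₀ := by rw [hI, Nat.card_Ico]
  have e5 : (S ∩ Finset.range p₀).card + (S ∩ I).card = S.card := by
    rw [← Finset.card_union_of_disjoint, ← Finset.inter_union_distrib_left]
    · congr 1
      apply Finset.inter_eq_left.mpr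
      intro x hx
      have := hS hx
      simp only [Finset.mem_range] at this
      simp only [Finset.mem_union, Finset.mem_range, hI, Finset.mem_Ico]
      omega
    · apply Finset.disjoint_left.mpr
      intro x hx hx'
      rw [Finset.mem_inter, Finset.mem_range] at hx
      rw [Finset.mem_inter, hI, Finset.mem_Ico] at hx'
      omega
  have e6 : (p₀ : ℤ) - 2 * (S ∩ Finset.range p₀).card = k := by
    have := hgt_hitP k S
    rw [hgt] at this
    exact_mod_cast this
  omega

lemma hgt_top (m : ℕ) (T : Finset ℕ) (hT : T ⊆ Finset.range m) :
    hgt T m = (m : ℤ) - 2 * T.card := by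
  rw [hgt, Finset.inter_eq_left.mpr hT]

-- strictly sorted list lemmas
lemma sorted_lt_getElem_add (l : List ℕ) (hl : l.Pairwise (· < ·)) :
    ∀ (d i : ℕ) (h : i + d < l.length), l[i]'(by omega) + d ≤ l[i+d]'h := by
  intro d
  induction d with
  | zero => intro i h; simp
  | succ d ih =>
    intro i h
    have h1 := ih i (by omega)
    have h2 : l[i+d]'(by omega) < l[(i+d)+1]'(by omega) :=
      (List.pairwise_iff_getElem.mp hl) _ _ _ _ (by omega)
    show l[i]'(by omega) + (d+1) ≤ l[(i+d)+1]'(by omega)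
    omega

lemma sorted_lt_le_getElem (l : List ℕ) (hl : l.Pairwise (· < ·)) (i j : ℕ)
    (hij : i ≤ j) (hj : j < l.length) :
    l[i]'(by omega) + (j - i) ≤ l[j]'hj := by
  have := sorted_lt_getElem_add l hl (j - i) i (by omega)
  convert this using 2 <;> omega

lemma sorted_lt_ge_idx (l : List ℕ) (hl : l.Pairwise (· < ·)) (j : ℕ) (hj : j < l.length) :
    j ≤ l[j]'hj := by
  have := sorted_lt_le_getElem l hl 0 j (by omega) hj
  omega

lemma count_lt_sorted (l : List ℕ) (hl : l.Pairwise (· < ·)) (j : ℕ) (hj : j < l.length) :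
    (l.toFinset ∩ Finset.range (l[j]'hj)).card = j := by
  have hnd : l.Nodup := hl.nodup
  have hset : l.toFinset ∩ Finset.range (l[j]'hj) = (l.take j).toFinset := by
    ext x
    simp only [Finset.mem_inter, List.mem_toFinset, Finset.mem_range]
    rw [List.mem_iff_getElem, List.mem_take_iff_getElem]
    constructor
    · rintro ⟨⟨i, hi, rfl⟩, hlt⟩
      refine ⟨i, ?_, rfl⟩
      have : i < j := by
        by_contra hc
        push_neg at hc
        have := sorted_lt_le_getElem l hl j i hc hi
        omega
      omega
    · rintro ⟨i, hi, rfl⟩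
      have hij : i < j := by omega
      have hi' : i < l.length := by omega
      refine ⟨⟨i, hi', rfl⟩, ?_⟩
      have := sorted_lt_le_getElem l hl i j (by omega) hj
      omega
  rw [hset, List.toFinset_card_of_nodup ((List.take_sublist _ _).nodup hnd),
    List.length_take]
  omega

lemma sorted_lt_getElem_ge (l : List ℕ) (hl : l.Pairwise (· < ·)) (p j : ℕ)
    (hj : j < l.length) (hc : (l.toFinset ∩ Finset.range p).card ≤ j) :
    p ≤ l[j]'hj := by
  by_contra hcon
  push_neg at hcon
  have hsub : (l.take (j+1)).toFinset ⊆ l.toFinset ∩ Finset.range p := by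
    intro x hx
    simp only [List.mem_toFinset, List.mem_take_iff_getElem] at hx
    obtain ⟨i, hi, rfl⟩ := hx
    have hi' : i < l.length := by omega
    have hile : i ≤ j := by omega
    simp only [Finset.mem_inter, List.mem_toFinset, Finset.mem_range]
    refine ⟨List.mem_iff_getElem.mpr ⟨i, hi', rfl⟩, ?_⟩
    have := sorted_lt_le_getElem l hl i j hile hj
    omega
  have hcard : (l.take (j+1)).toFinset.card = j + 1 := by
    rw [List.toFinset_card_of_nodup ((List.take_sublist _ _).nodup hl.nodup),
      List.length_take]
    omega
  have := Finset.card_le_card hsub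
  omega

-- condition translation
lemma exists_hgt_iff_sort (n k : ℕ) (hn : 1 ≤ n) (S : Finset ℕ)
    (h1 : S ⊆ Finset.range (2*n-1)) (h2 : S.card = n) :
    (∃ p ≤ 2*n-1, (k:ℤ) ≤ hgt S p) ↔
      (∃ j, ∃ hj : j < (S.sort (·≤·)).length, 2*j + k ≤ (S.sort (·≤·))[j]'hj) := by
  set l := S.sort (·≤·) with hld
  have hlen : l.length = n := by rw [hld, Finset.length_sort, h2]
  have hsl : l.Pairwise (· < ·) := List.sortedLT_iff_pairwise.mp (Finset.sortedLT_sort S)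
  have htf : l.toFinset = S := Finset.sort_toFinset S _
  constructor
  · rintro ⟨p, hp, hk'⟩
    set j := (S ∩ Finset.range p).card with hj
    rcases Nat.lt_or_ge j n with hjn | hjn
    · refine ⟨j, by omega, ?_⟩
      have hge : p ≤ l[j]'(by omega) := by
        apply sorted_lt_getElem_ge l hsl p j (by omega)
        rw [htf, ← hj]
      have : (k:ℤ) ≤ (p:ℤ) - 2 * j := hk'
      omega
    · exfalso
      have hsub : (S ∩ Finset.range p).card ≤ S.card :=
        Finset.card_le_card Finset.inter_subset_left
      have : j = n := by omega
      rw [hgt] at hk'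
      rw [← hj] at hk'
      omega
  · rintro ⟨j, hj, hcond⟩
    refine ⟨l[j]'hj, ?_, ?_⟩
    · have : l[j]'hj ∈ S := by
        rw [← htf]
        simp only [List.mem_toFinset]
        exact List.mem_iff_getElem.mpr ⟨j, hj, rfl⟩
      have := h1 this
      simp only [Finset.mem_range] at this
      omega
    · rw [hgt]
      have : (S ∩ Finset.range (l[j]'hj)).card = j := by
        rw [← htf]
        exact count_lt_sorted l hsl j hj
      rw [this]
      omega

def listOf (S : Finset ℕ) : List ℕ :=
  List.mapIdx (fun j x => x + 1 - j) (S.sort (·≤·))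

/-- properties of `listOf S` for `S ⊆ range (2n-1)` of card `n`. -/
lemma listOf_spec (n : ℕ) (hn : 1 ≤ n) (S : Finset ℕ)
    (h1 : S ⊆ Finset.range (2*n-1)) (h2 : S.card = n) :
    (listOf S).length = n ∧
    (∀ x ∈ listOf S, 1 ≤ x ∧ x ≤ n) ∧
    (listOf S).Pairwise (· ≤ ·) ∧
    (∀ j (hj : j < (S.sort (·≤·)).length),
      (listOf S)[j]'(by rw [listOf, List.length_mapIdx]; exact hj)
        = (S.sort (·≤·))[j]'hj + 1 - j) := by
  set l := S.sort (·≤·) with hld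
  have hlen : l.length = n := by rw [hld, Finset.length_sort, h2]
  have hsl : l.Pairwise (· < ·) := List.sortedLT_iff_pairwise.mp (Finset.sortedLT_sort S)
  have hgetle : ∀ i j (hij : i ≤ j) (hj : j < l.length), l[i]'(by omega) + (j - i) ≤ l[j]'hj :=
    fun i j hij hj => sorted_lt_le_getElem l hsl i j hij hj
  have hidx : ∀ j (hj : j < l.length), j ≤ l[j]'hj := fun j hj => sorted_lt_ge_idx l hsl j hj
  have hub : ∀ j (hj : j < l.length), l[j]'hj ≤ n - 1 + j := by
    intro j hj
    have hlast := hgetle j (n-1) (by omega) (by omega)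
    have : l[n-1]'(by omega) ∈ S := by
      rw [hld] at *
      exact (Finset.mem_sort _).mp (List.mem_iff_getElem.mpr ⟨n-1, by omega, rfl⟩)
    have := h1 this
    simp only [Finset.mem_range] at this
    omega
  have hget : ∀ j (hj : j < l.length),
      (listOf S)[j]'(by rw [listOf, List.length_mapIdx]; exact hj) = l[j]'hj + 1 - j := by
    intro j hj
    exact List.getElem_mapIdx
  have hlength : (listOf S).length = n := by rw [listOf, List.length_mapIdx, ← hld, hlen]
  refine ⟨hlength, ?_, ?_, hget⟩
  · intro x hx
    rw [List.mem_iff_getElem] at hx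
    obtain ⟨j, hj, rfl⟩ := hx
    rw [hlength] at hj
    rw [hget j (by omega)]
    have := hidx j (by omega)
    have := hub j (by omega)
    omega
  · rw [List.pairwise_iff_getElem]
    intro i j hi hj hij
    rw [hlength] at hi hj
    rw [hget i (by omega), hget j (by omega)]
    have := hgetle i j (by omega) (by omega)
    have := hidx i (by omega)
    omega

lemma listOf_cond_iff (n k : ℕ) (hn : 1 ≤ n) (S : Finset ℕ)
    (h1 : S ⊆ Finset.range (2*n-1)) (h2 : S.card = n) :
    (∃ j, ∃ hj : j < (S.sort (·≤·)).length, 2*j + k ≤ (S.sort (·≤·))[j]'hj) ↔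
      (∃ i, ∃ hi : i < (listOf S).length, k + i + 1 ≤ (listOf S)[i]'hi) := by
  obtain ⟨hlength, hmem, hsort, hget⟩ := listOf_spec n hn S h1 h2
  have hlen : (S.sort (·≤·)).length = n := by rw [Finset.length_sort, h2]
  have hsl : (S.sort (·≤·)).Pairwise (· < ·) := List.sortedLT_iff_pairwise.mp (Finset.sortedLT_sort S)
  constructor
  · rintro ⟨j, hj, hc⟩
    refine ⟨j, by omega, ?_⟩
    rw [hget j hj]
    have := sorted_lt_ge_idx _ hsl j hj
    omega
  · rintro ⟨i, hi, hc⟩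
    have hi' : i < (S.sort (·≤·)).length := by omega
    refine ⟨i, hi', ?_⟩
    rw [hget i hi'] at hc
    have := sorted_lt_ge_idx _ hsl i hi'
    omega

lemma A_to_B (n k : ℕ) (hk : k ≤ n - 1) (S : Finset ℕ)
    (h1 : S ⊆ Finset.range (2*n-1)) (h2 : S.card = n)
    (h3 : ∃ p ≤ 2*n-1, (k:ℤ) ≤ hgt S p) :
    hitP k S ≤ 2*n-1 ∧ reflMap k (2*n-1) S ⊆ Finset.range (2*n-1) ∧
      (reflMap k (2*n-1) S).card = n-1-k := by
  obtain ⟨p, hp, hk'⟩ := h3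
  have hhit : hitP k S ≤ 2*n-1 := le_trans (hitP_le_of_exists k S hk') hp
  refine ⟨hhit, reflMap_subset _ _ _ h1, ?_⟩
  have := reflMap_card k (2*n-1) S h1 hhit
  omega

lemma B_to_A (n k : ℕ) (hn : 1 ≤ n) (hk : k ≤ n - 1) (T : Finset ℕ)
    (h1 : T ⊆ Finset.range (2*n-1)) (h2 : T.card = n-1-k) :
    hitP k T ≤ 2*n-1 ∧ reflMap k (2*n-1) T ⊆ Finset.range (2*n-1) ∧
      (reflMap k (2*n-1) T).card = n ∧
      (∃ p ≤ 2*n-1, (k:ℤ) ≤ hgt (reflMap k (2*n-1) T) p) := by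
  have htop : (k:ℤ) ≤ hgt T (2*n-1) := by
    rw [hgt_top _ T h1, h2]
    have h2' : k ≤ n - 1 := hk
    have : (↑(n - 1 - k) : ℤ) = (n:ℤ) - 1 - k := by omega
    rw [this]
    have : ((2*n-1 : ℕ) : ℤ) = 2*(n:ℤ) - 1 := by omega
    rw [this]
    omega
  have hhit : hitP k T ≤ 2*n-1 := hitP_le_of_exists k T htop
  refine ⟨hhit, reflMap_subset _ _ _ h1, ?_, ?_⟩
  · have := reflMap_card k (2*n-1) T h1 hhit
    omega
  · refine ⟨hitP k T, hhit, ?_⟩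
    have : hgt (reflMap k (2*n-1) T) (hitP k T) = hgt T (hitP k T) :=
      hgt_congr _ (reflMap_inter_range k (2*n-1) T _ le_rfl)
    rw [this, hgt_hitP]

lemma listOf_inj (n : ℕ) (hn : 1 ≤ n) (S T : Finset ℕ)
    (hS1 : S ⊆ Finset.range (2*n-1)) (hS2 : S.card = n)
    (hT1 : T ⊆ Finset.range (2*n-1)) (hT2 : T.card = n)
    (h : listOf S = listOf T) : S = T := by
  obtain ⟨hSlen, _, _, hSget⟩ := listOf_spec n hn S hS1 hS2
  obtain ⟨hTlen, _, _, hTget⟩ := listOf_spec n hn T hT1 hT2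
  have hsl : (S.sort (·≤·)).Pairwise (· < ·) := List.sortedLT_iff_pairwise.mp (Finset.sortedLT_sort S)
  have htl : (T.sort (·≤·)).Pairwise (· < ·) := List.sortedLT_iff_pairwise.mp (Finset.sortedLT_sort T)
  have hSn : (S.sort (·≤·)).length = n := by rw [Finset.length_sort, hS2]
  have hTn : (T.sort (·≤·)).length = n := by rw [Finset.length_sort, hT2]
  have hsorteq : S.sort (·≤·) = T.sort (·≤·) := by
    apply List.ext_getElem (by omega)
    intro j hj1 hj2
    have e1 := hSget j hj1
    have e2 := hTget j hj2
    have g1 := sorted_lt_ge_idx _ hsl j hj1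
    have g2 := sorted_lt_ge_idx _ htl j hj2
    have e3 : (listOf S)[j]'(by rw [(listOf_spec n hn S hS1 hS2).1]; omega)
        = (listOf T)[j]'(by rw [(listOf_spec n hn T hT1 hT2).1]; omega) := by
      simp only [h]
    rw [e1, e2] at e3
    omega
  have : (S.sort (·≤·)).toFinset = (T.sort (·≤·)).toFinset := by rw [hsorteq]
  rwa [Finset.sort_toFinset, Finset.sort_toFinset] at this

lemma exists_finset_of_list (n k : ℕ) (hn : 1 ≤ n) (a : List ℕ)
    (hlen : a.length = n) (hbd : ∀ x ∈ a, 1 ≤ x ∧ x ≤ n) (hsort : a.Pairwise (· ≤ ·)) :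
    ∃ S : Finset ℕ, S ⊆ Finset.range (2*n-1) ∧ S.card = n ∧ listOf S = a ∧
      ((∃ i, ∃ hi : i < a.length, k + i + 1 ≤ a[i]'hi) ↔
        (∃ p ≤ 2*n-1, (k:ℤ) ≤ hgt S p)) := by
  have hbd' : ∀ j (hj : j < a.length), 1 ≤ a[j]'hj ∧ a[j]'hj ≤ n :=
    fun j hj => hbd _ (List.getElem_mem _)
  have hple : ∀ i j (hi : i < a.length) (hj : j < a.length), i < j →
      a[i]'hi ≤ a[j]'hj := fun i j hi hj hij =>
    (List.pairwise_iff_getElem.mp hsort) i j hi hj hij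
  set l := a.mapIdx (fun j x => x + j - 1) with hld
  have hllen : l.length = a.length := List.length_mapIdx
  have hlget : ∀ j (hj : j < a.length), l[j]'(by omega) = a[j]'hj + j - 1 :=
    fun j hj => List.getElem_mapIdx
  have hlsort : l.Pairwise (· < ·) := by
    rw [List.pairwise_iff_getElem]
    intro i j hi hj hij
    rw [hlget i (by omega), hlget j (by omega)]
    have h1 := hbd' i (by omega)
    have h2 := hple i j (by omega) (by omega) hij
    omega
  have hnodup : l.Nodup := hlsort.nodup
  set S := l.toFinset with hSd
  have hcard : S.card = n := by
    rw [hSd, List.toFinset_card_of_nodup hnodup, hllen, hlen]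
  have hsub : S ⊆ Finset.range (2*n-1) := by
    intro x hx
    rw [hSd, List.mem_toFinset, List.mem_iff_getElem] at hx
    obtain ⟨j, hj, rfl⟩ := hx
    rw [hlget j (by omega)]
    have h1 := hbd' j (by omega)
    simp only [Finset.mem_range]
    omega
  have hsortS : S.sort (·≤·) = l := by
    rw [hSd]
    exact (List.toFinset_sort _ hnodup).mpr (hlsort.imp le_of_lt)
  have hlistOf : listOf S = a := by
    apply List.ext_getElem
    · rw [listOf, List.length_mapIdx, hsortS, hllen]
    · intro j hj1 hj2
      have : (listOf S)[j]'hj1 = (S.sort (·≤·))[j]'(by rw [hsortS]; omega) + 1 - j :=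
        List.getElem_mapIdx
      rw [this]
      have e : (S.sort (·≤·))[j]'(by rw [hsortS]; omega) = l[j]'(by omega) := by
        simp only [hsortS]
      rw [e, hlget j hj2]
      have h1 := hbd' j hj2
      omega
  refine ⟨S, hsub, hcard, hlistOf, ?_⟩
  rw [exists_hgt_iff_sort n k hn S hsub hcard]
  constructor
  · rintro ⟨i, hi, hc⟩
    refine ⟨i, by rw [hsortS]; omega, ?_⟩
    have e : (S.sort (·≤·))[i]'(by rw [hsortS]; omega) = l[i]'(by omega) := by
      simp only [hsortS]
    rw [e, hlget i hi]
    have h1 := hbd' i hi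
    omega
  · rintro ⟨j, hj, hc⟩
    have hj' : j < a.length := by rw [hsortS] at hj; omega
    refine ⟨j, hj', ?_⟩
    have e : (S.sort (·≤·))[j]'hj = l[j]'(by omega) := by
      simp only [hsortS]
    rw [e, hlget j hj'] at hc
    have h1 := hbd' j hj'
    omega

lemma count_main (n k : ℕ) (hn : 1 ≤ n) (hk : k ≤ n - 1) :
    {a : List ℕ | (a.length = n ∧ ∀ x ∈ a, 1 ≤ x ∧ x ≤ n) ∧ a.Pairwise (· ≤ ·) ∧
      ∃ i, ∃ hi : i < a.length, k + i + 1 ≤ a[i]'hi}.ncard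
      = Nat.choose (2*n-1) (n-1-k) := by
  classical
  set m := 2*n-1 with hm
  set B := Finset.powersetCard (n-1-k) (Finset.range m) with hB
  have hBmem : ∀ T, T ∈ B ↔ (T ⊆ Finset.range m ∧ T.card = n-1-k) := by
    intro T
    rw [hB, Finset.mem_powersetCard]
  have himg : {a : List ℕ | (a.length = n ∧ ∀ x ∈ a, 1 ≤ x ∧ x ≤ n) ∧ a.Pairwise (· ≤ ·) ∧
      ∃ i, ∃ hi : i < a.length, k + i + 1 ≤ a[i]'hi}
      = (fun T => listOf (reflMap k m T)) '' ↑B := by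
    ext a
    simp only [Set.mem_setOf_eq, Set.mem_image, Finset.mem_coe]
    constructor
    · rintro ⟨⟨hlen, hbd⟩, hsort, hcond⟩
      obtain ⟨S, hS1, hS2, hSa, hSc⟩ := exists_finset_of_list n k hn a hlen hbd hsort
      obtain ⟨hhit, hsub, hcard⟩ := A_to_B n k hk S hS1 hS2 (hSc.mp hcond)
      refine ⟨reflMap k m S, (hBmem _).mpr ⟨hsub, hcard⟩, ?_⟩
      rw [reflMap_involutive k m S hhit, hSa]
    · rintro ⟨T, hT, rfl⟩
      obtain ⟨hT1, hT2⟩ := (hBmem T).mp hT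
      obtain ⟨hhit, hsub, hcard, hcond⟩ := B_to_A n k hn hk T hT1 hT2
      obtain ⟨hlength, hmem, hsort, _⟩ := listOf_spec n hn _ hsub hcard
      refine ⟨⟨hlength, hmem⟩, hsort, ?_⟩
      rw [← listOf_cond_iff n k hn _ hsub hcard,
        ← exists_hgt_iff_sort n k hn _ hsub hcard]
      exact hcond
  rw [himg]
  have hinj : Set.InjOn (fun T => listOf (reflMap k m T)) ↑B := by
    intro T1 h1 T2 h2 heq
    simp only [Finset.mem_coe] at h1 h2
    obtain ⟨hT1a, hT1b⟩ := (hBmem T1).mp h1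
    obtain ⟨hT2a, hT2b⟩ := (hBmem T2).mp h2
    obtain ⟨hhit1, hsub1, hcard1, _⟩ := B_to_A n k hn hk T1 hT1a hT1b
    obtain ⟨hhit2, hsub2, hcard2, _⟩ := B_to_A n k hn hk T2 hT2a hT2b
    have e := listOf_inj n hn _ _ hsub1 hcard1 hsub2 hcard2 heq
    have e2 := congrArg (reflMap k m) e
    rwa [reflMap_involutive k m T1 hhit1, reflMap_involutive k m T2 hhit2] at e2
  rw [Set.ncard_image_of_injOn hinj, Set.ncard_coe_finset, hB,
    Finset.card_powersetCard, Finset.card_range]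

theorem stmt1 (n k : ℕ) (hn : 1 ≤ n) (hk : k ≤ n - 1) :
    opGe n k = Nat.choose (2 * n - 1) (n - 1 - k) := by
  rw [opGe]
  have hset : {a : List ℕ | IsOrderedPrefSet n a ∧ k ≤ flaws n a} =
      {a : List ℕ | (a.length = n ∧ ∀ x ∈ a, 1 ≤ x ∧ x ≤ n) ∧ a.Pairwise (· ≤ ·) ∧
        ∃ i, ∃ hi : i < a.length, k + i + 1 ≤ a[i]'hi} := by
    ext a
    simp only [Set.mem_setOf_eq, IsOrderedPrefSet, IsPrefSet]
    constructor
    · rintro ⟨⟨⟨h1, h2⟩, h3⟩, h4⟩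
      exact ⟨⟨h1, h2⟩, h3, (flaws_ge_iff n k a hn h1 h2 h3).mp h4⟩
    · rintro ⟨⟨h1, h2⟩, h3, h4⟩
      exact ⟨⟨⟨h1, h2⟩, h3⟩, (flaws_ge_iff n k a hn h1 h2 h3).mpr h4⟩
  rw [hset, count_main n k hn hk]
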